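/- Let K be a subfield of F, let α ∈ K^n have pairwise distinct entries, and assume that η_j ∉ K for every j = 1,…,ℓ. Then the K-subfield subcode of the twisted Reed–Solomon code satisfies TRS_{k,n}[α,t,h,η] ∩ K^n = span_K{ ev_α(X^i) : i ∈ I }, where I = {0,1,…,k−1} ∖ {h_1,…,h_ℓ}. -/
import Mathlib


open Polynomial

/-- Evaluation vector: `ev_α(f) = (f(α₁),…,f(α_n))`. -/
noncomputable def evalVec {F : Type*} [Field F] {n : ℕ} (α : Fin n → F) (f : F[X]) :
    Fin n → F :=
  fun i => f.eval (α i)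

/-- The twisted polynomial with coefficient vector `u`:
`Σ_{i=0}^{k−1} u_i X^i + Σ_{j=1}^{ℓ} η_j u_{h_j} X^{k−1+t_j}`. -/
noncomputable def twistedPoly {F : Type*} [Field F] (k ℓ : ℕ) (t : Fin ℓ → ℕ)
    (h : Fin ℓ → Fin k) (η : Fin ℓ → F) (u : Fin k → F) : F[X] :=
  (∑ i : Fin k, Polynomial.C (u i) * Polynomial.X ^ (i : ℕ))
    + ∑ j : Fin ℓ, Polynomial.C (η j * u (h j)) * Polynomial.X ^ (k - 1 + t j)

/-- The space of twisted polynomials `P_{k,n}[t,h,η]`. -/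
def twistedPolySet (F : Type*) [Field F] (k ℓ : ℕ) (t : Fin ℓ → ℕ)
    (h : Fin ℓ → Fin k) (η : Fin ℓ → F) : Set F[X] :=
  { p | ∃ u : Fin k → F, p = twistedPoly k ℓ t h η u }

/-- The twisted Reed–Solomon code `TRS_{k,n}[α,t,h,η]`, as a subset of `F^n`. -/
def TRS {F : Type*} [Field F] {n : ℕ} (α : Fin n → F) (k ℓ : ℕ) (t : Fin ℓ → ℕ)
    (h : Fin ℓ → Fin k) (η : Fin ℓ → F) : Set (Fin n → F) :=
  { c | ∃ u : Fin k → F, c = evalVec α (twistedPoly k ℓ t h η u) }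

/-- The Reed–Solomon code `RS_{k,n}[α]`, as a subset of `F^n`. -/
def RS {F : Type*} [Field F] {n : ℕ} (α : Fin n → F) (k : ℕ) : Set (Fin n → F) :=
  { c | ∃ f : F[X], f.degree ≤ ((k - 1 : ℕ) : WithBot ℕ) ∧ c = evalVec α f }

section Aux

variable {F : Type*} [Field F] {n k ℓ : ℕ} {t : Fin ℓ → ℕ} {h : Fin ℓ → Fin k} {η : Fin ℓ → F}

lemma coeff_twisted (u : Fin k → F) (m : ℕ) :
    (twistedPoly k ℓ t h η u).coeff m =
      (∑ i : Fin k, if m = (i : ℕ) then u i else 0)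
        + (∑ j : Fin ℓ, if m = k - 1 + t j then η j * u (h j) else 0) := by
  unfold twistedPoly
  simp_rw [Polynomial.coeff_add, Polynomial.finset_sum_coeff, coeff_C_mul, coeff_X_pow,
    mul_ite, mul_one, mul_zero]

lemma coeff_twisted_lt (hk : 1 ≤ k) (ht1 : ∀ j, 1 ≤ t j) (u : Fin k → F) (i : Fin k) :
    (twistedPoly k ℓ t h η u).coeff i = u i := by
  rw [coeff_twisted]
  have h1 : (∑ i' : Fin k, if (i : ℕ) = (i' : ℕ) then u i' else 0) = u i := by
    simp_rw [Fin.val_eq_val]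
    simp
  have h2 : (∑ j : Fin ℓ, if (i : ℕ) = k - 1 + t j then η j * u (h j) else 0) = 0 := by
    refine Finset.sum_eq_zero fun j _ => ?_
    exact if_neg (by have := i.isLt; have := ht1 j; omega)
  rw [h1, h2, add_zero]

lemma coeff_twisted_tw (hk : 1 ≤ k) (ht1 : ∀ j, 1 ≤ t j) (htinj : Function.Injective t)
    (u : Fin k → F) (j : Fin ℓ) :
    (twistedPoly k ℓ t h η u).coeff (k - 1 + t j) = η j * u (h j) := by
  rw [coeff_twisted]
  have h1 : (∑ i : Fin k, if k - 1 + t j = (i : ℕ) then u i else 0) = 0 := by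
    refine Finset.sum_eq_zero fun i _ => ?_
    exact if_neg (by have := i.isLt; have := ht1 j; omega)
  have h2 : (∑ j' : Fin ℓ, if k - 1 + t j = k - 1 + t j' then η j' * u (h j') else 0)
      = η j * u (h j) := by
    rw [Finset.sum_eq_single j]
    · simp
    · intro b _ hb
      exact if_neg (fun hc => hb (htinj (by omega)))
    · simp
  rw [h1, h2, zero_add]

lemma degree_twisted_lt (hk : 1 ≤ k) (hkn : k ≤ n) (htr : ∀ j, t j ≤ n - k) (u : Fin k → F) :
    (twistedPoly k ℓ t h η u).degree < (n : WithBot ℕ) := by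
  rw [Polynomial.degree_lt_iff_coeff_zero]
  intro m hm
  rw [coeff_twisted]
  have hm' : n ≤ m := by exact_mod_cast hm
  have h1 : (∑ i : Fin k, if m = (i : ℕ) then u i else 0) = 0 :=
    Finset.sum_eq_zero fun i _ => if_neg (by have := i.isLt; omega)
  have h2 : (∑ j : Fin ℓ, if m = k - 1 + t j then η j * u (h j) else 0) = 0 :=
    Finset.sum_eq_zero fun j _ => if_neg (by have := htr j; omega)
  rw [h1, h2, add_zero]

lemma coeff_mem_of_evals_mem (K : Subfield F) (α : Fin n → F) (hαK : ∀ i, α i ∈ K)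
    (hα : Function.Injective α) (f : F[X]) (hdeg : f.degree < (n : WithBot ℕ))
    (hev : ∀ i, f.eval (α i) ∈ K) : ∀ m, f.coeff m ∈ K := by
  classical
  set β : Fin n → K := fun i => ⟨α i, hαK i⟩ with hβdef
  set r : Fin n → K := fun i => ⟨f.eval (α i), hev i⟩ with hrdef
  have hβ : Set.InjOn β (Finset.univ : Finset (Fin n)) := fun a _ b _ hab =>
    hα (congrArg Subtype.val hab)
  set g : K[X] := Lagrange.interpolate Finset.univ β r with hgdef
  have hcard : ((Finset.univ : Finset (Fin n)).card : WithBot ℕ) = (n : WithBot ℕ) := by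
    simp
  have hgdeg : g.degree < (n : WithBot ℕ) := by
    rw [← hcard]; exact Lagrange.degree_interpolate_lt r hβ
  have hαinj : Set.InjOn α (Finset.univ : Finset (Fin n)) := fun a _ b _ hab => hα hab
  have hfg : f = g.map (K.subtype) := by
    apply Polynomial.eq_of_degrees_lt_of_eval_index_eq (s := (Finset.univ : Finset (Fin n)))
      (v := α) hαinj
    · rw [hcard]; exact hdeg
    · rw [hcard]
      exact lt_of_le_of_lt (Polynomial.degree_map_le) hgdeg
    · intro i _
      have h1 : (g.map K.subtype).eval (α i) = K.subtype (g.eval (β i)) := by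
        rw [show α i = K.subtype (β i) from rfl, Polynomial.eval_map,
          Polynomial.eval₂_at_apply]
      rw [h1, hgdef, Lagrange.eval_interpolate_at_node r hβ (Finset.mem_univ i)]
      rfl
  intro m
  rw [hfg, Polynomial.coeff_map]
  exact (g.coeff m).2

lemma twisted_add (u v : Fin k → F) :
    twistedPoly k ℓ t h η (u + v) = twistedPoly k ℓ t h η u + twistedPoly k ℓ t h η v := by
  unfold twistedPoly
  simp only [Pi.add_apply, mul_add, map_add, add_mul, Finset.sum_add_distrib]
  ring

lemma twisted_smul (c : F) (u : Fin k → F) :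
    twistedPoly k ℓ t h η (fun i => c * u i) = Polynomial.C c * twistedPoly k ℓ t h η u := by
  unfold twistedPoly
  rw [mul_add, Finset.mul_sum, Finset.mul_sum]
  congr 1
  · exact Finset.sum_congr rfl fun i _ => by simp only [C_mul]; ring
  · exact Finset.sum_congr rfl fun j _ => by simp only [C_mul]; ring

lemma twisted_single (i : Fin k) (hi : ∀ j, h j ≠ i) :
    twistedPoly k ℓ t h η (fun i' => if i' = i then 1 else 0)
      = (Polynomial.X : F[X]) ^ (i : ℕ) := by
  unfold twistedPoly
  have h2 : (∑ j : Fin ℓ, Polynomial.C (η j * if h j = i then (1:F) else 0)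
      * Polynomial.X ^ (k - 1 + t j)) = 0 :=
    Finset.sum_eq_zero fun j _ => by rw [if_neg (hi j), mul_zero, map_zero, zero_mul]
  rw [h2, add_zero, Finset.sum_eq_single i]
  · simp
  · intro b _ hb
    simp [if_neg hb]
  · simp

end Aux

/-- Proposition on subfield subcodes: if α ∈ K^n has pairwise distinct
entries and η_j ∉ K for all j, then
TRS_{k,n}[α,t,h,η] ∩ K^n = span_K{ ev_α(X^i) : i ∈ I }, I = {0,…,k−1} ∖ {h_1,…,h_ℓ}. -/
theorem subfieldSubcode_TRS_eq_span
    {F : Type*} [Field F] {n k ℓ : ℕ}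
    (hk : 1 ≤ k) (hkn : k ≤ n) (hℓ : 1 ≤ ℓ)
    (t : Fin ℓ → ℕ) (htinj : Function.Injective t)
    (htr : ∀ j, 1 ≤ t j ∧ t j ≤ n - k)
    (h : Fin ℓ → Fin k) (hhinj : Function.Injective h)
    (η : Fin ℓ → F) (hη : ∀ j, η j ≠ 0)
    (K : Subfield F)
    (α : Fin n → F) (hαK : ∀ i, α i ∈ K) (hα : Function.Injective α)
    (hηK : ∀ j, η j ∉ K) :
    TRS α k ℓ t h η ∩ { v | ∀ i, v i ∈ K }
      = (Submodule.span K { w : Fin n → F |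
          ∃ i ∈ Finset.range k \ Finset.image (fun j => ((h j : ℕ))) Finset.univ,
            w = evalVec α (Polynomial.X ^ i) } : Submodule K (Fin n → F)) := by
  classical
  have ht1 : ∀ j, 1 ≤ t j := fun j => (htr j).1
  apply Set.Subset.antisymm
  · rintro c ⟨⟨u, rfl⟩, hcK⟩
    have hcK' : ∀ i, (twistedPoly k ℓ t h η u).eval (α i) ∈ K := hcK
    have hco : ∀ m, (twistedPoly k ℓ t h η u).coeff m ∈ K :=
      coeff_mem_of_evals_mem K α hαK hα _
        (degree_twisted_lt hk hkn (fun j => (htr j).2) u) hcK'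
    have hu : ∀ i : Fin k, u i ∈ K := fun i => by
      have := hco i
      rwa [coeff_twisted_lt hk ht1 u i] at this
    have huh : ∀ j, u (h j) = 0 := by
      intro j
      by_contra hne
      apply hηK j
      have h1 : η j * u (h j) ∈ K := by
        have := hco (k - 1 + t j)
        rwa [coeff_twisted_tw hk ht1 htinj u j] at this
      have h2 := K.mul_mem h1 (K.inv_mem (hu (h j)))
      rwa [mul_inv_cancel_right₀ hne] at h2
    have hfc : twistedPoly k ℓ t h η u
        = ∑ i : Fin k, Polynomial.C (u i) * Polynomial.X ^ (i : ℕ) := by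
      unfold twistedPoly
      rw [add_eq_left]
      exact Finset.sum_eq_zero fun j _ => by rw [huh j, mul_zero, map_zero, zero_mul]
    have hc : evalVec α (twistedPoly k ℓ t h η u)
        = ∑ i : Fin k, (⟨u i, hu i⟩ : K) • evalVec α ((Polynomial.X : F[X]) ^ (i : ℕ)) := by
      funext m
      rw [hfc]
      simp only [evalVec, Polynomial.eval_finset_sum, Finset.sum_apply, Polynomial.eval_mul,
        Polynomial.eval_C, Polynomial.eval_pow, Polynomial.eval_X]
      refine Finset.sum_congr rfl fun x _ => ?_
      show u x * α m ^ (x : ℕ) = u x * ((Polynomial.X : F[X]) ^ (x : ℕ)).eval (α m)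
      rw [Polynomial.eval_pow, Polynomial.eval_X]
    rw [hc]
    apply Submodule.sum_mem
    intro i _
    by_cases hih : ∃ j, h j = i
    · obtain ⟨j, hj⟩ := hih
      have hz : (⟨u i, hu i⟩ : K) = 0 := Subtype.ext (by rw [← hj]; exact huh j)
      rw [hz, zero_smul]
      exact Submodule.zero_mem _
    · refine Submodule.smul_mem _ _ (Submodule.subset_span ?_)
      refine ⟨(i : ℕ), Finset.mem_sdiff.mpr ⟨Finset.mem_range.mpr i.isLt, ?_⟩, rfl⟩
      simp only [Finset.mem_image, Finset.mem_univ, true_and, not_exists]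
      exact fun j hc => hih ⟨j, Fin.ext hc⟩
  · intro x hx
    refine Submodule.span_induction ?_ ?_ ?_ ?_ hx
    · rintro w ⟨i, hi, rfl⟩
      rw [Finset.mem_sdiff, Finset.mem_range] at hi
      obtain ⟨hik, hihook⟩ := hi
      have hnh : ∀ j, h j ≠ ⟨i, hik⟩ := by
        intro j hj
        apply hihook
        exact Finset.mem_image.mpr ⟨j, Finset.mem_univ j, by rw [hj]⟩
      constructor
      · exact ⟨(fun i' => if i' = ⟨i, hik⟩ then 1 else 0), by
          rw [twisted_single ⟨i, hik⟩ hnh]⟩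
      · intro m
        show ((Polynomial.X : F[X]) ^ i).eval (α m) ∈ K
        rw [Polynomial.eval_pow, Polynomial.eval_X]
        exact K.pow_mem (hαK m) i
    · constructor
      · exact ⟨0, by
          funext m
          simp [evalVec, twistedPoly]⟩
      · intro m; exact K.zero_mem
    · rintro x y _ _ ⟨⟨u, rfl⟩, hxK⟩ ⟨⟨v, rfl⟩, hyK⟩
      constructor
      · refine ⟨u + v, ?_⟩
        rw [twisted_add]
        funext m
        simp [evalVec]
      · intro m
        exact K.add_mem (hxK m) (hyK m)
    · rintro a x _ ⟨⟨u, rfl⟩, hxK⟩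
      constructor
      · refine ⟨fun i => (a : F) * u i, ?_⟩
        rw [twisted_smul]
        funext m
        show a • (twistedPoly k ℓ t h η u).eval (α m) = _
        simp only [evalVec, Polynomial.eval_mul, Polynomial.eval_C]
        rfl
      · intro m
        exact K.mul_mem a.2 (hxK m)
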